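/- Let Γ be a minimal elliptic weighted graph on vertex set I and let Γ' be a minimal elliptic weighted graph on I' which is a subgraph of Γ with Γ' ≠ Γ, and assume that the weights and genera agree on I': w'_i = w_i and g'_i = g_i for all i ∈ I'. Then the log discrepancies satisfy a_i ≤ a'_i for every i ∈ I' (equivalently b_i ≥ b'_i). If moreover Γ is connected and is not a Du Val graph, then a_i < a'_i for every i ∈ I'. -/

import Mathlib

open Finset

/-- A weighted graph: a finite vertex set `Fin n`, genera `g`, a symmetric integer
intersection matrix `M` with nonnegative off-diagonal entries and diagonal entries `≤ -1`
(the weight of vertex `i` is `-M i i`), and an external part consisting of `s` external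
components with rational coefficients `0 < b j ≤ 1` and intersection numbers `t j i`. -/
structure WGraph where
  n : ℕ
  npos : 0 < n
  M : Matrix (Fin n) (Fin n) ℤ
  g : Fin n → ℕ
  s : ℕ
  b : Fin s → ℚ
  t : Fin s → Fin n → ℕ
  symm : ∀ i k, M i k = M k i
  offdiag_nonneg : ∀ i k, i ≠ k → 0 ≤ M i k
  diag_le : ∀ i, M i i ≤ -1
  b_pos : ∀ j, 0 < b j
  b_le_one : ∀ j, b j ≤ 1

namespace WGraph

/-- The external contribution `c_i = ∑_j b_j t_{ji}`. -/
def extc (Γ : WGraph) (i : Fin Γ.n) : ℚ := ∑ j, Γ.b j * (Γ.t j i : ℚ)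

/-- `Γ` is elliptic: its intersection matrix is negative definite. -/
def Elliptic (Γ : WGraph) : Prop :=
  ∀ v : Fin Γ.n → ℝ, v ≠ 0 → ∑ i, ∑ k, v i * (Γ.M i k : ℝ) * v k < 0

/-- `Γ` is minimal: no vertex of genus `0` and weight `1`. -/
def IsMinimal (Γ : WGraph) : Prop := ∀ i, ¬ (Γ.g i = 0 ∧ Γ.M i i = -1)

/-- `Γ` is connected: the graph with an edge `{i,k}` whenever `M i k > 0` is connected. -/
def Connected (Γ : WGraph) : Prop :=
  (SimpleGraph.fromRel (fun i k : Fin Γ.n => 0 < Γ.M i k)).Connected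

/-- `a` is the (unique, when `M` is invertible) system of log discrepancies of `Γ`:
`∑_i a_i M_{ik} = (2 g_k − 2 − M_{kk}) + c_k + ∑_i M_{ik}` for all `k`. -/
def IsDiscr (Γ : WGraph) (a : Fin Γ.n → ℝ) : Prop :=
  ∀ k, ∑ i, a i * (Γ.M i k : ℝ) =
    (2 * (Γ.g k : ℝ) - 2 - (Γ.M k k : ℝ)) + (Γ.extc k : ℝ) + ∑ i, (Γ.M i k : ℝ)

/-- `Γ` is a Du Val graph: all genera `0`, all weights `2`, empty external contribution. -/
def DuVal (Γ : WGraph) : Prop :=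
  ∀ i, Γ.g i = 0 ∧ Γ.M i i = -2 ∧ Γ.extc i = 0

/-- The minimal log discrepancy `pld` of a system of log discrepancies `a`. -/
def pld (Γ : WGraph) (a : Fin Γ.n → ℝ) : ℝ :=
  Finset.univ.inf' ⟨⟨0, Γ.npos⟩, Finset.mem_univ _⟩ a

/-- `Γ'` is a subgraph of `Γ` via the injection `e` of vertex sets:
off-diagonal entries, weights, genera and external contributions of `Γ'` are dominated by
the corresponding ones of `Γ`. -/
def SubgraphVia (Γ' Γ : WGraph) (e : Fin Γ'.n → Fin Γ.n) : Prop :=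
  Function.Injective e ∧
  (∀ i k : Fin Γ'.n, i ≠ k → Γ'.M i k ≤ Γ.M (e i) (e k)) ∧
  (∀ i, Γ.M (e i) (e i) ≤ Γ'.M i i) ∧
  (∀ i, Γ'.g i ≤ Γ.g (e i)) ∧
  (∀ i, Γ'.extc i ≤ Γ.extc (e i))

/-- The subgraph `Γ'` (via `e`) differs from `Γ`. -/
def ProperVia (Γ' Γ : WGraph) (e : Fin Γ'.n → Fin Γ.n) : Prop :=
  ¬ (Function.Surjective e ∧
     (∀ i k : Fin Γ'.n, Γ'.M i k = Γ.M (e i) (e k)) ∧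
     (∀ i, Γ'.g i = Γ.g (e i)) ∧
     (∀ i, Γ'.extc i = Γ.extc (e i)))

end WGraph

/-- Order on coefficient tuples: `B ≤ B'` iff `B` is at least as long as `B'` and
coordinatewise `B j ≤ B' j` on the common indices. -/
def TupleLE {α : Type*} [LE α] {s t : ℕ} (B : Fin s → α) (B' : Fin t → α) : Prop :=
  ∃ h : t ≤ s, ∀ j : Fin t, B (Fin.castLE h j) ≤ B' j

/-- Strict order on coefficient tuples: `B < B'` iff `B ≤ B'` and moreover `B` is strictly
longer or some coordinate inequality is strict. -/
def TupleLT {α : Type*} [Preorder α] {s t : ℕ} (B : Fin s → α) (B' : Fin t → α) : Prop :=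
  TupleLE B B' ∧ (t < s ∨ ∃ h : t ≤ s, ∃ j : Fin t, B (Fin.castLE h j) < B' j)

section Helpers

lemma key_nonneg {n : ℕ} (N : Matrix (Fin n) (Fin n) ℝ)
    (hnd : ∀ v : Fin n → ℝ, v ≠ 0 → ∑ i, ∑ k, v i * N i k * v k < 0)
    (hoff : ∀ i k, i ≠ k → 0 ≤ N i k)
    (x : Fin n → ℝ) (hx : ∀ k, ∑ i, x i * N i k ≤ 0) :
    ∀ i, 0 ≤ x i := by
  set q : Fin n → ℝ := fun i => max (-x i) 0 with hqdef
  set p : Fin n → ℝ := fun i => max (x i) 0 with hpdef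
  have hq0 : ∀ i, 0 ≤ q i := fun i => le_max_right _ _
  have hp0 : ∀ i, 0 ≤ p i := fun i => le_max_right _ _
  have hxpq : ∀ i, x i = p i - q i := by
    intro i
    rcases le_total (x i) 0 with h' | h'
    · simp [hpdef, hqdef, max_eq_right h', max_eq_left (by linarith : (0:ℝ) ≤ -x i)]
    · simp [hpdef, hqdef, max_eq_left h', max_eq_right (by linarith : -x i ≤ (0:ℝ))]
  have hpq : ∀ i, p i * q i = 0 := by
    intro i
    rcases le_total (x i) 0 with h' | h'
    · simp [hpdef, max_eq_right h']
    · simp [hqdef, max_eq_right (by linarith : -x i ≤ (0:ℝ))]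
  have key : q = 0 := by
    by_contra h
    have hneg := hnd q h
    have h1 : ∑ k, (∑ i, x i * N i k) * q k ≤ 0 :=
      Finset.sum_nonpos fun k _ => mul_nonpos_iff.mpr (Or.inr ⟨hx k, hq0 k⟩)
    have h2 : ∑ k, (∑ i, x i * N i k) * q k
        = (∑ k, ∑ i, p i * N i k * q k) - ∑ k, ∑ i, q i * N i k * q k := by
      rw [← Finset.sum_sub_distrib]
      refine Finset.sum_congr rfl fun k _ => ?_
      rw [Finset.sum_mul, ← Finset.sum_sub_distrib]
      refine Finset.sum_congr rfl fun i _ => ?_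
      rw [hxpq i]; ring
    have h3 : 0 ≤ ∑ k, ∑ i, p i * N i k * q k := by
      refine Finset.sum_nonneg fun k _ => Finset.sum_nonneg fun i _ => ?_
      rcases eq_or_ne i k with rfl | hik
      · have : p i * N i i * q i = (p i * q i) * N i i := by ring
        rw [this, hpq i, zero_mul]
      · exact mul_nonneg (mul_nonneg (hp0 i) (hoff i k hik)) (hq0 k)
    have h4 : ∑ i, ∑ k, q i * N i k * q k = ∑ k, ∑ i, q i * N i k * q k :=
      Finset.sum_comm
    linarith
  intro i
  have hi := congrFun key i
  simp only [hqdef, Pi.zero_apply] at hi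
  by_contra h'
  push_neg at h'
  rw [max_eq_left (by linarith : (0:ℝ) ≤ -x i)] at hi
  linarith

lemma key_prop {n : ℕ} (N : Matrix (Fin n) (Fin n) ℝ)
    (hoff : ∀ i k, i ≠ k → 0 ≤ N i k)
    (x : Fin n → ℝ) (hx : ∀ k, ∑ i, x i * N i k ≤ 0) (hxnn : ∀ i, 0 ≤ x i)
    (k : Fin n) (hk : x k = 0) :
    (∑ i, x i * N i k = 0) ∧ ∀ i, x i * N i k = 0 := by
  have hterm : ∀ i ∈ Finset.univ (α := Fin n), 0 ≤ x i * N i k := by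
    intro i _
    rcases eq_or_ne i k with rfl | hik
    · rw [hk]; simp
    · exact mul_nonneg (hxnn i) (hoff i k hik)
  have hsum : ∑ i, x i * N i k = 0 :=
    le_antisymm (hx k) (Finset.sum_nonneg hterm)
  exact ⟨hsum, fun i => (Finset.sum_eq_zero_iff_of_nonneg hterm).mp hsum i (Finset.mem_univ i)⟩

lemma walk_closed {V : Type*} {G : SimpleGraph V} {P : V → Prop}
    (hcl : ∀ ⦃i k⦄, G.Adj i k → P i → P k) :
    ∀ {u v : V}, G.Walk u v → P u → P v := by
  intro u v w
  induction w with
  | nil => exact id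
  | cons h _ ih => exact fun hu => ih (hcl h hu)

lemma extc_nonneg (Γ : WGraph) (i : Fin Γ.n) : 0 ≤ Γ.extc i :=
  Finset.sum_nonneg fun j _ => mul_nonneg (Γ.b_pos j).le (by positivity)

lemma diag_bound (Γ : WGraph) (hmin : Γ.IsMinimal) (k : Fin Γ.n) :
    Γ.M k k ≤ 2 * (Γ.g k : ℤ) - 2 := by
  have h1 := Γ.diag_le k
  by_cases hg : Γ.g k = 0
  · have h2 : Γ.M k k ≠ -1 := fun hM => hmin k ⟨hg, hM⟩
    omega
  · omega

lemma codisc_eq (Γ : WGraph) (a : Fin Γ.n → ℝ) (ha : Γ.IsDiscr a) (k : Fin Γ.n) :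
    ∑ i, (1 - a i) * (Γ.M i k : ℝ)
      = 2 - 2 * (Γ.g k : ℝ) + (Γ.M k k : ℝ) - (Γ.extc k : ℝ) := by
  have h := ha k
  have h2 : ∑ i, (1 - a i) * (Γ.M i k : ℝ)
      = ∑ i, (Γ.M i k : ℝ) - ∑ i, a i * (Γ.M i k : ℝ) := by
    rw [← Finset.sum_sub_distrib]
    exact Finset.sum_congr rfl fun i _ => by ring
  rw [h2, h]; ring

lemma codisc_nonpos (Γ : WGraph) (hmin : Γ.IsMinimal) (a : Fin Γ.n → ℝ)
    (ha : Γ.IsDiscr a) (k : Fin Γ.n) : ∑ i, (1 - a i) * (Γ.M i k : ℝ) ≤ 0 := by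
  rw [codisc_eq Γ a ha k]
  have h1 : (Γ.M k k : ℝ) ≤ 2 * (Γ.g k : ℝ) - 2 := by
    exact_mod_cast diag_bound Γ hmin k
  have h2 : (0:ℝ) ≤ (Γ.extc k : ℝ) := by exact_mod_cast extc_nonneg Γ k
  linarith

lemma a_le_one (Γ : WGraph) (hmin : Γ.IsMinimal) (hell : Γ.Elliptic)
    (a : Fin Γ.n → ℝ) (ha : Γ.IsDiscr a) : ∀ i, a i ≤ 1 := by
  have := key_nonneg (fun i k => (Γ.M i k : ℝ)) hell
    (fun i k hik => by simpa using (Int.cast_nonneg_iff.mpr (Γ.offdiag_nonneg i k hik) : (0:ℝ) ≤ _))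
    (fun i => 1 - a i) (codisc_nonpos Γ hmin a ha)
  intro i
  have h2 := this i
  linarith

lemma a_lt_one (Γ : WGraph) (hmin : Γ.IsMinimal) (hell : Γ.Elliptic)
    (hconn : Γ.Connected) (hnDV : ¬ Γ.DuVal)
    (a : Fin Γ.n → ℝ) (ha : Γ.IsDiscr a) : ∀ i, a i < 1 := by
  by_contra h
  push_neg at h
  obtain ⟨i0, hi0⟩ := h
  have hle := a_le_one Γ hmin hell a ha
  have hnn : ∀ i, (0:ℝ) ≤ 1 - a i := fun i => by linarith [hle i]
  have hi0' : (1:ℝ) - a i0 = 0 := by linarith [hle i0]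
  set N : Matrix (Fin Γ.n) (Fin Γ.n) ℝ := fun i k => (Γ.M i k : ℝ) with hN
  have hoff : ∀ i k, i ≠ k → 0 ≤ N i k := fun i k hik => by
    show (0:ℝ) ≤ ((Γ.M i k : ℤ) : ℝ)
    exact_mod_cast Γ.offdiag_nonneg i k hik
  have hx : ∀ k, ∑ i, (1 - a i) * N i k ≤ 0 := codisc_nonpos Γ hmin a ha
  -- closure under adjacency
  have hcl : ∀ ⦃i k : Fin Γ.n⦄,
      (SimpleGraph.fromRel (fun i k : Fin Γ.n => 0 < Γ.M i k)).Adj i k →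
      (1 - a i = 0) → (1 - a k = 0) := by
    intro i k hadj hi
    rw [SimpleGraph.fromRel_adj] at hadj
    obtain ⟨hne, hor⟩ := hadj
    have hMki : 0 < Γ.M k i := by
      rcases hor with h' | h'
      · rw [Γ.symm k i]; exact h'
      · exact h'
    have := (key_prop N hoff (fun i => 1 - a i) hx hnn i hi).2 k
    have hNki : 0 < N k i := by
      show (0:ℝ) < ((Γ.M k i : ℤ) : ℝ)
      exact_mod_cast hMki
    by_contra hk
    exact hk (by
      have := mul_eq_zero.mp this
      rcases this with h' | h'
      · exact h'
      · exact absurd h' (ne_of_gt hNki))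
  have hall : ∀ j, 1 - a j = 0 := by
    intro j
    obtain ⟨w⟩ := hconn.preconnected i0 j
    exact walk_closed hcl w hi0'
  -- derive Du Val
  apply hnDV
  intro k
  have heq := codisc_eq Γ a ha k
  have hz : ∑ i, (1 - a i) * (Γ.M i k : ℝ) = 0 :=
    Finset.sum_eq_zero fun i _ => by rw [hall i, zero_mul]
  rw [hz] at heq
  have h2 : (0:ℝ) ≤ (Γ.extc k : ℝ) := by exact_mod_cast extc_nonneg Γ k
  have h1 : (Γ.M k k : ℝ) ≤ 2 * (Γ.g k : ℝ) - 2 := by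
    exact_mod_cast diag_bound Γ hmin k
  have hc0 : (Γ.extc k : ℝ) = 0 := by linarith
  have hM2 : (Γ.M k k : ℝ) = 2 * (Γ.g k : ℝ) - 2 := by linarith
  have hMZ : Γ.M k k = 2 * (Γ.g k : ℤ) - 2 := by exact_mod_cast hM2
  have hdl := Γ.diag_le k
  have hg0 : Γ.g k = 0 := by omega
  refine ⟨hg0, by omega, by exact_mod_cast hc0⟩

end Helpers

/-- Let `Γ'` be a proper subgraph of the minimal elliptic graph `Γ`
(both minimal elliptic), with the same weights and genera on the common vertices. Then
`a_i ≤ a'_i` on the common vertices; if moreover `Γ` is connected and not Du Val, then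
`a_i < a'_i`. -/
theorem subgraph_discrepancy_comparison (Γ Γ' : WGraph) (e : Fin Γ'.n → Fin Γ.n)
    (hsub : WGraph.SubgraphVia Γ' Γ e) (hproper : WGraph.ProperVia Γ' Γ e)
    (hmin : Γ.IsMinimal) (hell : Γ.Elliptic) (hmin' : Γ'.IsMinimal) (hell' : Γ'.Elliptic)
    (hw : ∀ i, Γ'.M i i = Γ.M (e i) (e i)) (hg : ∀ i, Γ'.g i = Γ.g (e i))
    (a : Fin Γ.n → ℝ) (ha : Γ.IsDiscr a) (a' : Fin Γ'.n → ℝ) (ha' : Γ'.IsDiscr a') :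
    (∀ i, a (e i) ≤ a' i) ∧
    ((Γ.Connected ∧ ¬ Γ.DuVal) → ∀ i, a (e i) < a' i) := by
  obtain ⟨hinj, hoffle, hdiagge, hgle, hcle⟩ := hsub
  have hA1 : ∀ i, a i ≤ 1 := a_le_one Γ hmin hell a ha
  set S : Finset (Fin Γ.n) := Finset.univ.image e with hS
  have heS : ∀ k, e k ∈ S := fun k => Finset.mem_image.mpr ⟨k, Finset.mem_univ _, rfl⟩
  have hsplit : ∀ f : Fin Γ.n → ℝ,
      ∑ i, f i = (∑ i', f (e i')) + ∑ i ∈ Sᶜ, f i := by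
    intro f
    rw [← Finset.sum_add_sum_compl S f]
    congr 1
    rw [hS, Finset.sum_image (fun x _ y _ h => hinj h)]
  -- the defining identity for the difference vector
  have hr : ∀ k, ∑ i, (a' i - a (e i)) * (Γ'.M i k : ℝ)
      = ((Γ'.extc k : ℝ) - (Γ.extc (e k) : ℝ))
        + (∑ i, (a (e i) - 1) * ((Γ.M (e i) (e k) : ℝ) - (Γ'.M i k : ℝ)))
        + ∑ i ∈ Sᶜ, (a i - 1) * (Γ.M i (e k) : ℝ) := by
    intro k
    have E1 := ha' k
    have E2 := ha (e k)
    have E2a : ∑ i : Fin Γ.n, a i * (Γ.M i (e k) : ℝ)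
        = (∑ i', a (e i') * (Γ.M (e i') (e k) : ℝ))
          + ∑ i ∈ Sᶜ, a i * (Γ.M i (e k) : ℝ) := hsplit _
    have E2b : ∑ i : Fin Γ.n, (Γ.M i (e k) : ℝ)
        = (∑ i', ((Γ.M (e i') (e k) : ℤ) : ℝ)) + ∑ i ∈ Sᶜ, ((Γ.M i (e k) : ℤ) : ℝ) :=
      hsplit _
    have X0 : ∑ i, (a' i - a (e i)) * (Γ'.M i k : ℝ)
        = (∑ i, a' i * (Γ'.M i k : ℝ)) - ∑ i, a (e i) * (Γ'.M i k : ℝ) := by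
      rw [← Finset.sum_sub_distrib]
      exact Finset.sum_congr rfl fun i _ => by ring
    have X1 : ∑ i, (a (e i) - 1) * ((Γ.M (e i) (e k) : ℝ) - (Γ'.M i k : ℝ))
        = (((∑ i, a (e i) * (Γ.M (e i) (e k) : ℝ))
            - ∑ i, a (e i) * (Γ'.M i k : ℝ))
          - ((∑ i, ((Γ.M (e i) (e k) : ℤ) : ℝ)) - ∑ i, (Γ'.M i k : ℝ))) := by
      rw [← Finset.sum_sub_distrib, ← Finset.sum_sub_distrib, ← Finset.sum_sub_distrib]
      exact Finset.sum_congr rfl fun i _ => by ring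
    have X2 : ∑ i ∈ Sᶜ, (a i - 1) * (Γ.M i (e k) : ℝ)
        = (∑ i ∈ Sᶜ, a i * (Γ.M i (e k) : ℝ)) - ∑ i ∈ Sᶜ, ((Γ.M i (e k) : ℤ) : ℝ) := by
      rw [← Finset.sum_sub_distrib]
      exact Finset.sum_congr rfl fun i _ => by ring
    have hwc : (Γ'.M k k : ℝ) = (Γ.M (e k) (e k) : ℝ) := by exact_mod_cast hw k
    have hgc : (Γ'.g k : ℝ) = (Γ.g (e k) : ℝ) := by exact_mod_cast hg k
    rw [X0, X1, X2, E1]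
    rw [E2a, E2b] at E2
    linarith
  -- nonpositivity of the three parts
  have hP1 : ∀ k, (Γ'.extc k : ℝ) - (Γ.extc (e k) : ℝ) ≤ 0 := by
    intro k
    have := hcle k
    have : ((Γ'.extc k : ℚ) : ℝ) ≤ ((Γ.extc (e k) : ℚ) : ℝ) := by exact_mod_cast this
    linarith
  have hP2term : ∀ k i, (a (e i) - 1) * ((Γ.M (e i) (e k) : ℝ) - (Γ'.M i k : ℝ)) ≤ 0 := by
    intro k i
    rcases eq_or_ne i k with rfl | hik
    · rw [hw i]; simp
    · have h1 : a (e i) - 1 ≤ 0 := by linarith [hA1 (e i)]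
      have h2 : (0:ℝ) ≤ (Γ.M (e i) (e k) : ℝ) - (Γ'.M i k : ℝ) := by
        have := hoffle i k hik
        have : ((Γ'.M i k : ℤ) : ℝ) ≤ ((Γ.M (e i) (e k) : ℤ) : ℝ) := by exact_mod_cast this
        linarith
      exact mul_nonpos_iff.mpr (Or.inr ⟨h1, h2⟩)
  have hP3term : ∀ k, ∀ i ∈ Sᶜ, (a i - 1) * (Γ.M i (e k) : ℝ) ≤ 0 := by
    intro k i hi
    have hine : i ≠ e k := fun h => (Finset.mem_compl.mp hi) (h ▸ heS k)
    have h1 : a i - 1 ≤ 0 := by linarith [hA1 i]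
    have h2 : (0:ℝ) ≤ (Γ.M i (e k) : ℝ) := by
      exact_mod_cast Γ.offdiag_nonneg i (e k) hine
    exact mul_nonpos_iff.mpr (Or.inr ⟨h1, h2⟩)
  have hrle : ∀ k, ∑ i, (a' i - a (e i)) * (Γ'.M i k : ℝ) ≤ 0 := by
    intro k
    rw [hr k]
    have t2 : ∑ i, (a (e i) - 1) * ((Γ.M (e i) (e k) : ℝ) - (Γ'.M i k : ℝ)) ≤ 0 :=
      Finset.sum_nonpos fun i _ => hP2term k i
    have t3 : ∑ i ∈ Sᶜ, (a i - 1) * (Γ.M i (e k) : ℝ) ≤ 0 :=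
      Finset.sum_nonpos fun i hi => hP3term k i hi
    linarith [hP1 k]
  have hoff' : ∀ i k : Fin Γ'.n, i ≠ k → (0:ℝ) ≤ ((Γ'.M i k : ℤ) : ℝ) :=
    fun i k hik => by exact_mod_cast Γ'.offdiag_nonneg i k hik
  have hd0 : ∀ i, 0 ≤ a' i - a (e i) :=
    key_nonneg (fun i k => ((Γ'.M i k : ℤ) : ℝ)) hell' hoff'
      (fun i => a' i - a (e i)) hrle
  constructor
  · intro i; linarith [hd0 i]
  -- strict part
  rintro ⟨hconn, hnDV⟩
  have hAlt : ∀ i, a i < 1 := a_lt_one Γ hmin hell hconn hnDV a ha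
  by_contra hcon
  push_neg at hcon
  obtain ⟨i0, hi0⟩ := hcon
  have hdi0 : a' i0 - a (e i0) = 0 := le_antisymm (by linarith) (hd0 i0)
  -- consequences of a zero coordinate
  have hzero : ∀ k : Fin Γ'.n, a' k - a (e k) = 0 →
      (Γ'.extc k = Γ.extc (e k)) ∧
      (∀ i, i ≠ k → Γ'.M i k = Γ.M (e i) (e k)) ∧
      (∀ i ∈ Sᶜ, Γ.M i (e k) = 0) ∧
      (∀ i, (a' i - a (e i)) * ((Γ'.M i k : ℤ) : ℝ) = 0) := by
    intro k hk
    have hprop := key_prop (fun i k => ((Γ'.M i k : ℤ) : ℝ)) hoff'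
      (fun i => a' i - a (e i)) hrle hd0 k hk
    have hr0 : ((Γ'.extc k : ℝ) - (Γ.extc (e k) : ℝ))
        + (∑ i, (a (e i) - 1) * ((Γ.M (e i) (e k) : ℝ) - (Γ'.M i k : ℝ)))
        + (∑ i ∈ Sᶜ, (a i - 1) * (Γ.M i (e k) : ℝ)) = 0 := by
      rw [← hr k]; exact hprop.1
    have t2 : ∑ i, (a (e i) - 1) * ((Γ.M (e i) (e k) : ℝ) - (Γ'.M i k : ℝ)) ≤ 0 :=
      Finset.sum_nonpos fun i _ => hP2term k i
    have t3 : ∑ i ∈ Sᶜ, (a i - 1) * (Γ.M i (e k) : ℝ) ≤ 0 :=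
      Finset.sum_nonpos fun i hi => hP3term k i hi
    have z1 : (Γ'.extc k : ℝ) - (Γ.extc (e k) : ℝ) = 0 := by linarith [hP1 k]
    have z2 : ∑ i, (a (e i) - 1) * ((Γ.M (e i) (e k) : ℝ) - (Γ'.M i k : ℝ)) = 0 := by
      linarith [hP1 k]
    have z3 : ∑ i ∈ Sᶜ, (a i - 1) * (Γ.M i (e k) : ℝ) = 0 := by linarith [hP1 k]
    refine ⟨?_, ?_, ?_, hprop.2⟩
    · have : ((Γ'.extc k : ℚ) : ℝ) = ((Γ.extc (e k) : ℚ) : ℝ) := by linarith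
      exact_mod_cast this
    · intro i hik
      have hterm := (Finset.sum_eq_zero_iff_of_nonpos
        (fun i _ => hP2term k i)).mp z2 i (Finset.mem_univ i)
      have hane : a (e i) - 1 ≠ 0 := by have := hAlt (e i); intro h; linarith
      have : (Γ.M (e i) (e k) : ℝ) - (Γ'.M i k : ℝ) = 0 :=
        (mul_eq_zero.mp hterm).resolve_left hane
      have : ((Γ'.M i k : ℤ) : ℝ) = ((Γ.M (e i) (e k) : ℤ) : ℝ) := by linarith
      exact_mod_cast this
    · intro i hi
      have hterm := (Finset.sum_eq_zero_iff_of_nonpos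
        (fun i hi => hP3term k i hi)).mp z3 i hi
      have hane : a i - 1 ≠ 0 := by have := hAlt i; intro h; linarith
      have : ((Γ.M i (e k) : ℤ) : ℝ) = 0 := (mul_eq_zero.mp hterm).resolve_left hane
      exact_mod_cast this
  -- closure of the zero set under Γ-adjacency
  have hclP : ∀ ⦃j j2 : Fin Γ.n⦄,
      (SimpleGraph.fromRel (fun i k : Fin Γ.n => 0 < Γ.M i k)).Adj j j2 →
      (∃ i', e i' = j ∧ a' i' - a (e i') = 0) →
      (∃ i', e i' = j2 ∧ a' i' - a (e i') = 0) := by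
    rintro j j2 hadj ⟨i', rfl, hdi'⟩
    rw [SimpleGraph.fromRel_adj] at hadj
    obtain ⟨hne, hor⟩ := hadj
    have hMpos : 0 < Γ.M j2 (e i') := by
      rcases hor with h' | h'
      · rw [Γ.symm j2 (e i')]; exact h'
      · exact h'
    obtain ⟨hcE, hcM, hcOut, hcD⟩ := hzero i' hdi'
    by_cases hjs : j2 ∈ S
    · obtain ⟨m, _, rfl⟩ := Finset.mem_image.mp hjs
      have hmne : m ≠ i' := fun h => hne (by rw [h])
      have hMeq : Γ'.M m i' = Γ.M (e m) (e i') := hcM m hmne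
      have hpos' : (0:ℝ) < ((Γ'.M m i' : ℤ) : ℝ) := by
        rw [hMeq]; exact_mod_cast hMpos
      have hm0 := hcD m
      refine ⟨m, rfl, ?_⟩
      rcases mul_eq_zero.mp hm0 with h' | h'
      · exact h'
      · exact absurd h' (ne_of_gt hpos')
    · exfalso
      have := hcOut j2 (Finset.mem_compl.mpr hjs)
      omega
  have hallP : ∀ j : Fin Γ.n, ∃ i', e i' = j ∧ a' i' - a (e i') = 0 := by
    intro j
    obtain ⟨w⟩ := hconn.preconnected (e i0) j
    exact walk_closed hclP w ⟨i0, rfl, hdi0⟩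
  have hsurj : Function.Surjective e := fun j => by
    obtain ⟨i', hi', _⟩ := hallP j; exact ⟨i', hi'⟩
  have hallZ : ∀ i' : Fin Γ'.n, a' i' - a (e i') = 0 := by
    intro i'
    obtain ⟨i'', heq, hz⟩ := hallP (e i')
    have : i'' = i' := hinj heq
    rwa [this] at hz
  apply hproper
  refine ⟨hsurj, ?_, hg, fun i => (hzero i (hallZ i)).1⟩
  intro i k
  rcases eq_or_ne i k with rfl | hik
  · exact hw i
  · exact (hzero k (hallZ k)).2.1 i hik
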